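/- Let f : 2^V → {0,1,…,d} with f(∅) = 0. Then every minimal unreachable set U of f satisfies 1 ≤ |U| ≤ d+1, and every set I ⊆ V containing no minimal unreachable set satisfies |I| ≤ d. Moreover, if a singleton {u} is a minimal unreachable set, then f({u}) = 0. -/

import Mathlib

/-- `X` is reachable from `∅`: there is a chain `∅ = X_0 ⊊ X_1 ⊊ ⋯ ⊊ X_k = X`
(`k = |X|`, so each step adds exactly one element) with strictly increasing `f`-values. -/
def Reachable {V : Type*} [DecidableEq V] (f : Finset V → ℕ) (X : Finset V) : Prop :=
  ∃ c : ℕ → Finset V, c 0 = ∅ ∧ c X.card = X ∧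
    ∀ i < X.card, c i ⊂ c (i + 1) ∧ f (c i) < f (c (i + 1))

/-- `U` is a minimal unreachable set. -/
def MinUnreachable {V : Type*} [DecidableEq V] (f : Finset V → ℕ) (U : Finset V) : Prop :=
  ¬ Reachable f U ∧ ∀ W : Finset V, W ⊂ U → Reachable f W

theorem stmt_10 (V : Type*) [Fintype V] [DecidableEq V] (d : ℕ) (f : Finset V → ℕ)
    (hrange : ∀ X : Finset V, f X ≤ d) (hempty : f ∅ = 0) :
    (∀ U : Finset V, MinUnreachable f U → 1 ≤ U.card ∧ U.card ≤ d + 1) ∧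
    (∀ I : Finset V, (∀ U : Finset V, MinUnreachable f U → ¬ U ⊆ I) → I.card ≤ d) ∧
    (∀ u : V, MinUnreachable f {u} → f {u} = 0) := by
  -- Reachable sets satisfy |X| ≤ f X
  have cardLe : ∀ X : Finset V, Reachable f X → X.card ≤ f X := by
    intro X ⟨c, hc0, hcX, hstep⟩
    have key : ∀ i ≤ X.card, i ≤ f (c i) := by
      intro i hi
      induction i with
      | zero => simp
      | succ n ih =>
        have hn : n < X.card := hi
        have := (hstep n hn).2
        have := ih (Nat.le_of_lt hn)
        omega
    have := key X.card le_rfl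
    rwa [hcX] at this
  -- the empty set is reachable
  have hreach_empty : Reachable f (∅ : Finset V) := by
    exact ⟨fun _ => ∅, rfl, by simp, by simp⟩
  -- every unreachable set contains a minimal unreachable subset
  have exists_min : ∀ U : Finset V, ¬ Reachable f U →
      ∃ W, W ⊆ U ∧ MinUnreachable f W := by
    intro U
    induction U using Finset.strongInduction with
    | _ U ih =>
      intro hU
      by_cases h : ∀ W, W ⊂ U → Reachable f W
      · exact ⟨U, subset_rfl, hU, h⟩
      · push_neg at h
        obtain ⟨W, hWU, hW⟩ := h
        obtain ⟨W', hW', hmin⟩ := ih W hWU hW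
        exact ⟨W', hW'.trans hWU.subset, hmin⟩
  refine ⟨?_, ?_, ?_⟩
  · intro U ⟨hU, hmin⟩
    constructor
    · rcases Finset.eq_empty_or_nonempty U with rfl | h
      · exact absurd hreach_empty hU
      · exact Finset.card_pos.mpr h
    · by_contra h
      push_neg at h
      obtain ⟨W, hWU, hWcard⟩ := Finset.exists_subset_card_eq (s := U) (n := d + 1) (by omega)
      have hWsub : W ⊂ U := lt_of_le_of_ne hWU (by
        intro h'; subst h'; omega)
      have := cardLe W (hmin W hWsub)
      have := hrange W
      omega
  · intro I hI
    have hIreach : Reachable f I := by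
      by_contra h
      obtain ⟨W, hWI, hmin⟩ := exists_min I h
      exact hI W hmin hWI
    have := cardLe I hIreach
    have := hrange I
    omega
  · intro u ⟨hU, _⟩
    by_contra h
    apply hU
    refine ⟨fun i => if i = 0 then ∅ else {u}, by simp, by simp, ?_⟩
    intro i hi
    have : i = 0 := by simpa using hi
    subst this
    simp only [if_true, Nat.add_eq_zero, one_ne_zero, and_false, if_false]
    exact ⟨Finset.empty_ssubset.mpr (Finset.singleton_nonempty u),
      by rw [hempty]; omega⟩
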